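/- The function φ(x) = plog(‖x − x*‖² ε^{-1}), where plog(y) = log(ey) for y ≥ 1 and plog(y) = y for y ≤ 1, is Lipschitz continuous on ℝ^d with Lipschitz constant 2/√ε. Consequently W_t(u, x_{t-1}, …, x_0) = (ε/(2αcε − α²M²))·plog(‖u − x*‖²ε^{-1}) + t is H-Lipschitz in u with H = 2√ε(2αcε − α²M²)^{-1}, provided 2αcε − α²M² > 0. -/

import Mathlib

/-- The piecewise logarithm. -/
noncomputable def plog (x : ℝ) : ℝ := if 1 ≤ x then Real.log (Real.exp 1 * x) else x

lemma plog_of_le_one {x : ℝ} (hx : x ≤ 1) : plog x = x := by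
  unfold plog
  rcases eq_or_lt_of_le hx with h | h
  · subst h; simp [Real.log_exp]
  · rw [if_neg (by linarith)]

lemma plog_of_one_le {x : ℝ} (hx : 1 ≤ x) : plog x = 1 + Real.log x := by
  unfold plog
  rw [if_pos hx, Real.log_mul (Real.exp_ne_zero 1) (by linarith), Real.log_exp]

lemma plog_key {ε : ℝ} (hε : 0 < ε) {a b : ℝ} (ha : 0 ≤ a) (hab : a ≤ b) :
    plog (b ^ 2 * ε⁻¹) - plog (a ^ 2 * ε⁻¹) ≤ 2 / Real.sqrt ε * (b - a) := by
  set s := Real.sqrt ε with hs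
  have hs0 : 0 < s := Real.sqrt_pos.mpr hε
  have hs2 : s ^ 2 = ε := Real.sq_sqrt hε.le
  have hb : 0 ≤ b := ha.trans hab
  rcases le_total b s with hbs | hsb
  · -- both ≤ 1
    have h1 : b ^ 2 * ε⁻¹ ≤ 1 := by
      rw [← hs2]
      rw [mul_inv_le_iff₀ (by positivity), one_mul]
      nlinarith
    have h2 : a ^ 2 * ε⁻¹ ≤ 1 := by
      rw [← hs2, mul_inv_le_iff₀ (by positivity), one_mul]
      nlinarith
    rw [plog_of_le_one h1, plog_of_le_one h2, ← hs2]
    have : (b ^ 2 - a ^ 2) * (s ^ 2)⁻¹ ≤ 2 / s * (b - a) := by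
      rw [inv_eq_one_div, mul_one_div, div_mul_eq_mul_div,
        div_le_div_iff₀ (by positivity) hs0]
      nlinarith [mul_nonneg (mul_nonneg (sub_nonneg.mpr hab) hs0.le)
        (by linarith : (0:ℝ) ≤ 2 * s - (a + b))]
    linarith [this]
  · rcases le_total a s with has | hsa
    · -- a ≤ s ≤ b
      have h1 : 1 ≤ b ^ 2 * ε⁻¹ := by
        rw [← hs2, le_mul_inv_iff₀ (by positivity), one_mul]
        nlinarith
      have h2 : a ^ 2 * ε⁻¹ ≤ 1 := by
        rw [← hs2, mul_inv_le_iff₀ (by positivity), one_mul]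
        nlinarith
      rw [plog_of_one_le h1, plog_of_le_one h2]
      have hrw : b ^ 2 * ε⁻¹ = (b / s) ^ 2 := by
        rw [← hs2]; field_simp
      have hlog : Real.log (b ^ 2 * ε⁻¹) = 2 * Real.log (b / s) := by
        rw [hrw, Real.log_pow]; push_cast; ring
      have hb0 : 0 < b := lt_of_lt_of_le hs0 hsb
      have hbs0 : 0 < b / s := div_pos hb0 hs0
      have h3 : Real.log (b / s) ≤ b / s - 1 := Real.log_le_sub_one_of_pos hbs0
      rw [hlog]
      have ha2 : a ^ 2 * ε⁻¹ = (a / s) ^ 2 := by rw [← hs2]; field_simp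
      rw [ha2]
      have key : 1 + 2 * (b / s - 1) - (a / s) ^ 2 ≤ 2 / s * (b - a) := by
        have h4 : 2 / s * (b - a) = 2 * (b / s) - 2 * (a / s) := by
          field_simp
        rw [h4]
        nlinarith [sq_nonneg (1 - a / s)]
      linarith
    · -- s ≤ a
      have h1 : 1 ≤ b ^ 2 * ε⁻¹ := by
        rw [← hs2, le_mul_inv_iff₀ (by positivity), one_mul]
        nlinarith
      have h2 : 1 ≤ a ^ 2 * ε⁻¹ := by
        rw [← hs2, le_mul_inv_iff₀ (by positivity), one_mul]
        nlinarith
      rw [plog_of_one_le h1, plog_of_one_le h2]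
      have ha0 : 0 < a := lt_of_lt_of_le hs0 hsa
      have hb0 : 0 < b := lt_of_lt_of_le ha0 hab
      have hdiff : Real.log (b ^ 2 * ε⁻¹) - Real.log (a ^ 2 * ε⁻¹)
          = 2 * Real.log (b / a) := by
        rw [← Real.log_div (by positivity) (by positivity)]
        have : b ^ 2 * ε⁻¹ / (a ^ 2 * ε⁻¹) = (b / a) ^ 2 := by
          field_simp
        rw [this, Real.log_pow]; push_cast; ring
      have h3 : Real.log (b / a) ≤ b / a - 1 := Real.log_le_sub_one_of_pos (by positivity)
      have h4 : b / a - 1 = (b - a) / a := by field_simp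
      have h5 : (b - a) / a ≤ (b - a) / s := by
        apply div_le_div_of_nonneg_left (by linarith) hs0 hsa
      have h6 : 2 * ((b - a) / s) = 2 / s * (b - a) := by ring
      nlinarith

lemma plog_mono : Monotone plog := by
  intro x y hxy
  unfold plog
  split_ifs with h1 h2 h2
  · exact Real.log_le_log (by positivity)
      (mul_le_mul_of_nonneg_left hxy (Real.exp_pos 1).le)
  · linarith
  · have : Real.exp 1 * 1 ≤ Real.exp 1 * y := by nlinarith [Real.exp_pos 1]
    have h3 : (1:ℝ) ≤ Real.log (Real.exp 1 * y) := by
      calc (1:ℝ) = Real.log (Real.exp 1 * 1) := by simp [Real.log_exp]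
        _ ≤ _ := Real.log_le_log (by positivity) this
    linarith
  · exact hxy

lemma plog_abs_key {ε : ℝ} (hε : 0 < ε) {a b : ℝ} (ha : 0 ≤ a) (hb : 0 ≤ b) :
    |plog (a ^ 2 * ε⁻¹) - plog (b ^ 2 * ε⁻¹)| ≤ 2 / Real.sqrt ε * |a - b| := by
  rcases le_total a b with h | h
  · have hsq : a ^ 2 * ε⁻¹ ≤ b ^ 2 * ε⁻¹ :=
      mul_le_mul_of_nonneg_right (by nlinarith) (inv_nonneg.mpr hε.le)
    have hmono : plog (a ^ 2 * ε⁻¹) ≤ plog (b ^ 2 * ε⁻¹) := plog_mono hsq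
    rw [abs_of_nonpos (by linarith), abs_of_nonpos (by linarith)]
    have := plog_key hε ha h
    linarith
  · have hsq : b ^ 2 * ε⁻¹ ≤ a ^ 2 * ε⁻¹ :=
      mul_le_mul_of_nonneg_right (by nlinarith) (inv_nonneg.mpr hε.le)
    have hmono : plog (b ^ 2 * ε⁻¹) ≤ plog (a ^ 2 * ε⁻¹) := plog_mono hsq
    rw [abs_of_nonneg (by linarith), abs_of_nonneg (by linarith)]
    have := plog_key hε hb h
    linarith

theorem stmt_11 (d : ℕ) (xstar : EuclideanSpace ℝ (Fin d)) (ε α c M : ℝ)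
    (hε : 0 < ε) (hα : 0 < α) (hc : 0 < c) (hM : 0 < M)
    (hpos : α ^ 2 * M ^ 2 < 2 * α * c * ε) (t : ℝ) :
    LipschitzWith (2 / Real.sqrt ε).toNNReal
      (fun u : EuclideanSpace ℝ (Fin d) => plog (‖u - xstar‖ ^ 2 * ε⁻¹)) ∧
    LipschitzWith (2 * Real.sqrt ε * (2 * α * c * ε - α ^ 2 * M ^ 2)⁻¹).toNNReal
      (fun u : EuclideanSpace ℝ (Fin d) =>
        ε / (2 * α * c * ε - α ^ 2 * M ^ 2) * plog (‖u - xstar‖ ^ 2 * ε⁻¹) + t) := by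
  have hs0 : 0 < Real.sqrt ε := Real.sqrt_pos.mpr hε
  have hD : 0 < 2 * α * c * ε - α ^ 2 * M ^ 2 := by linarith
  have hnorm : ∀ u v : EuclideanSpace ℝ (Fin d),
      |‖u - xstar‖ - ‖v - xstar‖| ≤ dist u v := by
    intro u v
    have h := abs_norm_sub_norm_le (u - xstar) (v - xstar)
    have : u - xstar - (v - xstar) = u - v := by abel
    rw [this] at h
    rw [dist_eq_norm]
    exact h
  have hkey : ∀ u v : EuclideanSpace ℝ (Fin d),
      |plog (‖u - xstar‖ ^ 2 * ε⁻¹) - plog (‖v - xstar‖ ^ 2 * ε⁻¹)|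
        ≤ 2 / Real.sqrt ε * dist u v := by
    intro u v
    calc |plog (‖u - xstar‖ ^ 2 * ε⁻¹) - plog (‖v - xstar‖ ^ 2 * ε⁻¹)|
        ≤ 2 / Real.sqrt ε * |‖u - xstar‖ - ‖v - xstar‖| :=
          plog_abs_key hε (norm_nonneg _) (norm_nonneg _)
      _ ≤ 2 / Real.sqrt ε * dist u v := by
          apply mul_le_mul_of_nonneg_left (hnorm u v) (by positivity)
  constructor
  · apply LipschitzWith.of_dist_le_mul
    intro u v
    rw [Real.coe_toNNReal _ (by positivity), Real.dist_eq]
    exact hkey u v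
  · apply LipschitzWith.of_dist_le_mul
    intro u v
    rw [Real.coe_toNNReal _ (by positivity), Real.dist_eq]
    have : ε / (2 * α * c * ε - α ^ 2 * M ^ 2) * plog (‖u - xstar‖ ^ 2 * ε⁻¹) + t -
        (ε / (2 * α * c * ε - α ^ 2 * M ^ 2) * plog (‖v - xstar‖ ^ 2 * ε⁻¹) + t)
        = ε / (2 * α * c * ε - α ^ 2 * M ^ 2) *
          (plog (‖u - xstar‖ ^ 2 * ε⁻¹) - plog (‖v - xstar‖ ^ 2 * ε⁻¹)) := by ring
    rw [this, abs_mul, abs_of_nonneg (by positivity)]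
    calc ε / (2 * α * c * ε - α ^ 2 * M ^ 2) *
          |plog (‖u - xstar‖ ^ 2 * ε⁻¹) - plog (‖v - xstar‖ ^ 2 * ε⁻¹)|
        ≤ ε / (2 * α * c * ε - α ^ 2 * M ^ 2) * (2 / Real.sqrt ε * dist u v) := by
          apply mul_le_mul_of_nonneg_left (hkey u v) (by positivity)
      _ = (ε / (2 * α * c * ε - α ^ 2 * M ^ 2) * (2 / Real.sqrt ε)) * dist u v := by
          ring
      _ = 2 * Real.sqrt ε * (2 * α * c * ε - α ^ 2 * M ^ 2)⁻¹ * dist u v := by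
          have hss : Real.sqrt ε * Real.sqrt ε = ε := Real.mul_self_sqrt hε.le
          have hcoef : ε / (2 * α * c * ε - α ^ 2 * M ^ 2) * (2 / Real.sqrt ε)
              = 2 * Real.sqrt ε * (2 * α * c * ε - α ^ 2 * M ^ 2)⁻¹ := by
            have hε2 : Real.sqrt ε ^ 2 = ε := Real.sq_sqrt hε.le
            rw [div_mul_div_comm, ← div_eq_mul_inv, div_eq_div_iff (by positivity) hD.ne']
            linear_combination (-2 * (2 * α * c * ε - α ^ 2 * M ^ 2)) * hε2
          rw [hcoef]
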